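/- The balanced Bellman-Ford algorithm terminates: each iteration either strictly decreases some distance d_j (by at least the minimum weight gap) or, keeping all distances fixed, strictly decreases the sum of squared cluster sizes; since the modified energy H_δ = Σ_i d_i² + δ Σ_a s_a² is nonnegative and takes only finitely many values, only finitely many updating steps can occur. -/
import Mathlib
open scoped ENNReal
open Finset

private def bbfCM {N k : ℕ} (μ : Fin N → Fin k) : ℕ :=
  ∑ a : Fin k, ((Finset.univ.filter (fun x => μ x = a)).card) ^ 2

private lemma bbfCM_lt {N k : ℕ} (μ : Fin N → Fin k) (i j : Fin N) (hne : μ i ≠ μ j)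
    (hcard : (Finset.univ.filter (fun x => μ x = μ i)).card + 1
      < (Finset.univ.filter (fun x => μ x = μ j)).card) :
    bbfCM (Function.update μ j (μ i)) < bbfCM μ := by
  classical
  set A := Finset.univ.filter (fun x => μ x = μ i) with hA
  set B := Finset.univ.filter (fun x => μ x = μ j) with hB
  have hjB : j ∈ B := by simp [hB]
  have hjA : j ∉ A := by simp [hA]; exact fun h => hne h.symm
  have hfib1 : Finset.univ.filter (fun x => Function.update μ j (μ i) x = μ i)
      = insert j A := by
    ext x
    rcases eq_or_ne x j with rfl | hx
    · simp [hA]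
    · simp [hA, Function.update_of_ne hx, hx]
  have hfib2 : Finset.univ.filter (fun x => Function.update μ j (μ i) x = μ j)
      = B.erase j := by
    ext x
    rcases eq_or_ne x j with rfl | hx
    · simp [hB, hne]
    · simp [hB, Function.update_of_ne hx, hx]
  have hfib3 : ∀ a, a ≠ μ i → a ≠ μ j →
      Finset.univ.filter (fun x => Function.update μ j (μ i) x = a)
        = Finset.univ.filter (fun x => μ x = a) := by
    intro a ha1 ha2
    ext x
    rcases eq_or_ne x j with rfl | hx
    · simp [ha1.symm, ha2.symm]
    · simp [Function.update_of_ne hx]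
  -- split sums
  have hmemi : μ i ∈ (Finset.univ : Finset (Fin k)) := Finset.mem_univ _
  have hmemj : μ j ∈ (Finset.univ : Finset (Fin k)).erase (μ i) :=
    Finset.mem_erase.mpr ⟨hne.symm, Finset.mem_univ _⟩
  have key : ∀ g : Fin k → ℕ, ∑ a, g a
      = (∑ a ∈ ((Finset.univ.erase (μ i)).erase (μ j)), g a) + g (μ j) + g (μ i) := by
    intro g
    rw [Finset.sum_erase_add _ _ hmemj, Finset.sum_erase_add _ _ hmemi]
  unfold bbfCM
  rw [key, key]
  have hdiff : (∑ a ∈ ((Finset.univ.erase (μ i)).erase (μ j)),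
        ((Finset.univ.filter (fun x => Function.update μ j (μ i) x = a)).card) ^ 2)
      = ∑ a ∈ ((Finset.univ.erase (μ i)).erase (μ j)),
        ((Finset.univ.filter (fun x => μ x = a)).card) ^ 2 := by
    apply Finset.sum_congr rfl
    intro a ha
    have h1 := Finset.mem_erase.mp ha
    have h2 := Finset.mem_erase.mp h1.2
    rw [hfib3 a h2.1 h1.1]
  rw [hdiff, hfib1, hfib2, Finset.card_insert_of_notMem hjA, Finset.card_erase_of_mem hjB]
  have hcard' : A.card + 1 < B.card := hcard
  obtain ⟨r0, hr0⟩ : ∃ r0, B.card = A.card + 2 + r0 := ⟨B.card - A.card - 2, by omega⟩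
  rw [hr0]
  have : A.card + 2 + r0 - 1 = A.card + 1 + r0 := by omega
  rw [this]
  nlinarith [sq_nonneg (A.card + r0)]

theorem balanced_bellman_ford_terminates
    (N k : ℕ) (W : Fin N → Fin N → ℝ≥0∞) :
    ¬∃ (d : ℕ → Fin N → ℝ≥0∞) (m : ℕ → Fin N → Fin k),
      ∀ t : ℕ, ∃ i j : Fin N, 0 < W i j ∧
        ((d t i + W i j < d t j ∧
          d (t + 1) = Function.update (d t) j (d t i + W i j) ∧
          m (t + 1) = Function.update (m t) j (m t i)) ∨
         (d t i + W i j = d t j ∧ m t i ≠ m t j ∧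
          (Finset.univ.filter (fun x => m t x = m t i)).card + 1
            < (Finset.univ.filter (fun x => m t x = m t j)).card ∧
          d (t + 1) = d t ∧
          m (t + 1) = Function.update (m t) j (m t i))) := by
  classical
  rintro ⟨d, m, h⟩
  -- distances are coordinatewise antitone
  have hanti : ∀ t x, d (t + 1) x ≤ d t x := by
    intro t x
    obtain ⟨i, j, hw, hc⟩ := h t
    rcases hc with ⟨hlt, hd, -⟩ | ⟨-, -, -, hd, -⟩
    · rw [hd]
      rcases eq_or_ne x j with rfl | hx
      · rw [Function.update_self]; exact hlt.le
      · rw [Function.update_of_ne hx]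
    · rw [hd]
  have hmono : ∀ t t' x, t ≤ t' → d t' x ≤ d t x := by
    intro t t' x htt
    obtain ⟨n, rfl⟩ := Nat.exists_eq_add_of_le htt
    induction n with
    | zero => exact le_rfl
    | succ n ih =>
      exact le_trans (hanti (t + n) x) (ih (Nat.le_add_right _ _))
  by_cases hall : ∀ x, ∃ T, ∀ t, T ≤ t → d t x = d T x
  · -- all coordinates eventually constant: eventually all steps decrease bbfCM
    choose Tf hTf using hall
    set T0 := Finset.univ.sup Tf with hT0
    have hconst : ∀ t, T0 ≤ t → ∀ x, d t x = d T0 x := by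
      intro t ht x
      have h1 : Tf x ≤ T0 := Finset.le_sup (Finset.mem_univ x)
      rw [hTf x t (h1.trans ht), hTf x T0 h1]
    have hstep : ∀ t, T0 ≤ t → bbfCM (m (t + 1)) < bbfCM (m t) := by
      intro t ht
      obtain ⟨i, j, hw, hc⟩ := h t
      rcases hc with ⟨hlt, hd, -⟩ | ⟨-, hne, hcard, -, hm⟩
      · exfalso
        have h1 : d (t + 1) j = d t i + W i j := by rw [hd, Function.update_self]
        have h2 : d (t + 1) j = d t j := by
          rw [hconst (t + 1) (ht.trans (Nat.le_succ t)) j, hconst t ht j]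
        rw [h2] at h1
        exact absurd hlt (by rw [← h1]; exact lt_irrefl _)
      · rw [hm]
        exact bbfCM_lt (m t) i j hne hcard
    have hseq : ∀ n, bbfCM (m (T0 + n)) + n ≤ bbfCM (m T0) := by
      intro n
      induction n with
      | zero => simp
      | succ n ih =>
        have h2 := hstep (T0 + n) (Nat.le_add_right _ _)
        have h3 : T0 + (n + 1) = T0 + n + 1 := rfl
        rw [h3]
        omega
    have := hseq (bbfCM (m T0) + 1)
    omega
  · -- some coordinate decreases infinitely often
    push_neg at hall
    set F : Finset (Fin N) :=
      Finset.univ.filter (fun x => ¬ ∃ T, ∀ t, T ≤ t → d t x = d T x) with hFdef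
    have hFne : F.Nonempty := by
      obtain ⟨x, hx⟩ := hall
      refine ⟨x, Finset.mem_filter.mpr ⟨Finset.mem_univ _, ?_⟩⟩
      rintro ⟨T, hT⟩
      obtain ⟨t, ht, hne⟩ := hx T
      exact hne (hT t ht)
    -- infinitely many strict decreases for coordinates in F
    have hdecF : ∀ x ∈ F, ∀ T, ∃ t, T ≤ t ∧ d (t + 1) x < d t x := by
      intro x hx T
      by_contra hcon
      push_neg at hcon
      refine (Finset.mem_filter.mp hx).2 ⟨T, ?_⟩
      have heq : ∀ n, d (T + n) x = d T x := by
        intro n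
        induction n with
        | zero => rfl
        | succ n ih =>
          have h2 : d (T + n + 1) x = d (T + n) x :=
            le_antisymm (hanti (T + n) x) (hcon (T + n) (Nat.le_add_right _ _))
          rw [show T + (n + 1) = T + n + 1 from rfl, h2, ih]
      intro t ht
      obtain ⟨n, rfl⟩ := Nat.exists_eq_add_of_le ht
      exact heq n
    set L : Fin N → ℝ≥0∞ := fun x => ⨅ t, d t x with hL
    have hLle : ∀ x t, L x ≤ d t x := fun x t => iInf_le _ t
    obtain ⟨j0, hj0F, hj0min⟩ := F.exists_min_image L hFne
    -- the eventual constancy time for coordinates not in F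
    have hTnf : ∀ x : Fin N, ∃ T, x ∈ F ∨ ∀ t, T ≤ t → d t x = d T x := by
      intro x
      by_cases hx : x ∈ F
      · exact ⟨0, Or.inl hx⟩
      · have hx' : ∃ T, ∀ t, T ≤ t → d t x = d T x := by
          by_contra hc
          exact hx (Finset.mem_filter.mpr ⟨Finset.mem_univ x, hc⟩)
        obtain ⟨T, hT⟩ := hx'
        exact ⟨T, Or.inr hT⟩
    choose Tf hTf using hTnf
    set T0 := Finset.univ.sup Tf with hT0
    have hconst' : ∀ x, x ∉ F → ∀ t, T0 ≤ t → d t x = d T0 x := by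
      intro x hx t ht
      rcases hTf x with hmem | heq
      · exact absurd hmem hx
      · have h1 : Tf x ≤ T0 := Finset.le_sup (Finset.mem_univ x)
        rw [heq t (h1.trans ht), heq T0 h1]
    -- minimal positive weight
    set WS : Finset ℝ≥0∞ :=
      ((Finset.univ : Finset (Fin N × Fin N)).image (fun p => W p.1 p.2)).filter
        (fun w => 0 < w) with hWS
    have hWSne : WS.Nonempty := by
      obtain ⟨i0, j0', hw0, -⟩ := h 0
      exact ⟨W i0 j0', Finset.mem_filter.mpr
        ⟨Finset.mem_image.mpr ⟨(i0, j0'), Finset.mem_univ _, rfl⟩, hw0⟩⟩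
    set wmin := WS.min' hWSne with hwmin
    have hwminpos : 0 < wmin := (Finset.mem_filter.mp (WS.min'_mem hWSne)).2
    have hwmin_le : ∀ i j : Fin N, 0 < W i j → wmin ≤ W i j := by
      intro i j hw
      exact WS.min'_le _ (Finset.mem_filter.mpr
        ⟨Finset.mem_image.mpr ⟨(i, j), Finset.mem_univ _, rfl⟩, hw⟩)
    -- L j0 is finite
    obtain ⟨t', -, hdec'⟩ := hdecF j0 hj0F 0
    have hLj0top : L j0 ≠ ⊤ := by
      have h1 : d (t' + 1) j0 < ⊤ := lt_of_lt_of_le hdec' le_top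
      exact (lt_of_le_of_lt (hLle j0 (t' + 1)) h1).ne
    have hLlt : L j0 < L j0 + wmin := ENNReal.lt_add_right hLj0top hwminpos.ne'
    obtain ⟨t1, ht1⟩ : ∃ t, d t j0 < L j0 + wmin := by
      have h1 : (⨅ t, d t j0) < L j0 + wmin := hLlt
      exact iInf_lt_iff.mp h1
    set T1 := max T0 t1 with hT1
    -- key claim: decreases of j0 after T1 take values in a fixed finite set
    have hval : ∀ t, T1 ≤ t → d (t + 1) j0 < d t j0 →
        ∃ i, d (t + 1) j0 = d T0 i + W i j0 := by
      intro t ht hdec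
      obtain ⟨i, j, hw, hc⟩ := h t
      rcases hc with ⟨hlt, hd, -⟩ | ⟨-, -, -, hd, -⟩
      · have hjj : j = j0 := by
          by_contra hne
          rw [hd, Function.update_of_ne (fun hh => hne hh.symm)] at hdec
          exact absurd hdec (lt_irrefl _)
        rw [hjj] at hd hw hlt
        have hv : d (t + 1) j0 = d t i + W i j0 := by rw [hd, Function.update_self]
        by_cases hiF : i ∈ F
        · exfalso
          have h1 : L j0 + wmin ≤ d t i + W i j0 :=
            add_le_add ((hj0min i hiF).trans (hLle i t)) (hwmin_le i j0 hw)
          have h2 : d (t + 1) j0 < L j0 + wmin := by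
            have h3 : d (t + 1) j0 ≤ d t1 j0 :=
              hmono t1 (t + 1) j0 (le_trans (le_max_right T0 t1)
                (le_trans ht (Nat.le_succ t)))
            exact lt_of_le_of_lt h3 ht1
          rw [hv] at h2
          exact absurd (lt_of_le_of_lt h1 h2) (lt_irrefl _)
        · refine ⟨i, ?_⟩
          rw [hv, hconst' i hiF t (le_trans (le_max_left T0 t1) ht)]
      · exfalso
        rw [hd] at hdec
        exact absurd hdec (lt_irrefl _)
    -- build an infinite sequence of decrease times after T1
    choose nxt hnxt1 hnxt2 using hdecF j0 hj0F
    set g : ℕ → ℕ := fun n => Nat.rec (nxt T1) (fun _ p => nxt (p + 1)) n with hg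
    have hg0 : g 0 = nxt T1 := rfl
    have hgs : ∀ n, g (n + 1) = nxt (g n + 1) := fun n => rfl
    have hgT1 : ∀ n, T1 ≤ g n := by
      intro n
      induction n with
      | zero => exact hnxt1 T1
      | succ n ih =>
        rw [hgs]
        exact le_trans (le_trans ih (Nat.le_succ _)) (hnxt1 (g n + 1))
    have hgdec : ∀ n, d (g n + 1) j0 < d (g n) j0 := by
      intro n
      cases n with
      | zero => exact hnxt2 T1
      | succ n => rw [hgs]; exact hnxt2 (g n + 1)
    have hgstep : ∀ n, g n + 1 ≤ g (n + 1) := by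
      intro n; rw [hgs]; exact hnxt1 (g n + 1)
    set v : ℕ → ℝ≥0∞ := fun n => d (g n + 1) j0 with hv
    have hvanti : StrictAnti v := by
      apply strictAnti_nat_of_succ_lt
      intro n
      calc d (g (n + 1) + 1) j0 < d (g (n + 1)) j0 := hgdec (n + 1)
        _ ≤ d (g n + 1) j0 := hmono (g n + 1) (g (n + 1)) j0 (hgstep n)
    have hvmem : ∀ n, v n ∈ Set.range (fun i : Fin N => d T0 i + W i j0) := by
      intro n
      obtain ⟨i, hi⟩ := hval (g n) (hgT1 n) (hgdec n)
      exact ⟨i, hi.symm⟩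
    have hfin : (Set.range (fun i : Fin N => d T0 i + W i j0)).Finite :=
      Set.finite_range _
    have hinf : (Set.range (fun i : Fin N => d T0 i + W i j0)).Infinite := by
      apply Set.infinite_of_injective_forall_mem hvanti.injective hvmem
    exact hfin.not_infinite hinf
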